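/- Let K > 0, m > 0, P > 0, γ > 0, D_alt > 0, r_a > 0, and λ > 0. Define ᾱ(k,i,P,γ) = (−1)^{k−i} (m/(K+m))^m · ((m)_i/(i!)²) · (K/(K+m))^i · ((1+K)/P)^{k+1} · γ^{k+1}/((k−i)!(k+1)). Then the OMA outage probability, obtained by averaging the Rician shadowed power CDF at threshold γ·w² over the BPP distance density, satisfies ∫_{√(D_alt²+λ²)}^{√(D_alt²+λ²+r_a²)} (2w/r_a²) · [∫₀^{γw²} f_X(x) dx] dw = ∑_{k=0}^∞ ∑_{i=0}^{k} ᾱ(k,i,P,γ) · Ḡ(λ,k), where the outer series converges. -/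

import Mathlib

/-- Pochhammer symbol (ascending factorial) `(m)_k = m (m+1) ⋯ (m+k-1)`. -/
noncomputable def poch (m : ℝ) (k : ℕ) : ℝ := ∏ j ∈ Finset.range k, (m + j)

/-- Confluent hypergeometric function `₁F₁(m, 1; z) = ∑ (m)_n zⁿ / (n!)²`. -/
noncomputable def F11 (m z : ℝ) : ℝ := ∑' n : ℕ, poch m n * z ^ n / (Nat.factorial n : ℝ) ^ 2

/-- Rician shadowed power PDF with Rician factor `K`, shadowing parameter `m`,
and normalized power `P`. -/
noncomputable def fX (K m P x : ℝ) : ℝ :=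
  Real.rpow (m / (K + m)) m * ((1 + K) / P) * Real.exp (-(1 + K) * x / P) *
    F11 m (K * (1 + K) * x / ((K + m) * P))

/-- Series coefficient `ᾱ(k,i,P,γ)` of the Rician shadowed power CDF. -/
noncomputable def alphaBar (K m : ℝ) (k i : ℕ) (P γ : ℝ) : ℝ :=
  (-1 : ℝ) ^ (k - i) * Real.rpow (m / (K + m)) m * (poch m i / (Nat.factorial i : ℝ) ^ 2) *
    (K / (K + m)) ^ i * ((1 + K) / P) ^ (k + 1) * γ ^ (k + 1) /
    ((Nat.factorial (k - i) : ℝ) * ((k : ℝ) + 1))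

/-- `Ḡ(λ,k)`, the `(2(k+1))`-th moment of the BPP distance distribution. -/
noncomputable def Gbar (Dalt ra lam : ℝ) (k : ℕ) : ℝ :=
  ((Dalt ^ 2 + lam ^ 2 + ra ^ 2) ^ (k + 2) - (Dalt ^ 2 + lam ^ 2) ^ (k + 2)) /
    (ra ^ 2 * (k + 2))

namespace OMAaux

open Finset MeasureTheory Real Filter

/-- `e`-coefficients: coefficients of `C·b·F11(q x)` as a power series in `x`. -/
noncomputable def ec (K m P : ℝ) (i : ℕ) : ℝ :=
  Real.rpow (m / (K + m)) m * ((1 + K) / P) *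
    (poch m i * (K * (1 + K) / ((K + m) * P)) ^ i / (Nat.factorial i : ℝ) ^ 2)

/-- `g`-coefficients: coefficients of `exp (-b x)` as a power series in `x`. -/
noncomputable def gc (K P : ℝ) (j : ℕ) : ℝ :=
  (-((1 + K) / P)) ^ j / (Nat.factorial j : ℝ)

/-- Cauchy product coefficients. -/
noncomputable def ac (K m P : ℝ) (k : ℕ) : ℝ :=
  ∑ i ∈ Finset.range (k + 1), ec K m P i * gc K P (k - i)

lemma poch_pos {m : ℝ} (hm : 0 < m) (k : ℕ) : 0 < poch m k :=
  Finset.prod_pos fun j _ => by positivity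

lemma poch_succ (m : ℝ) (n : ℕ) : poch m (n + 1) = poch m n * (m + n) :=
  Finset.prod_range_succ _ _

lemma summable_norm_F11 {m : ℝ} (hm : 0 < m) (z : ℝ) :
    Summable fun n : ℕ => ‖poch m n * z ^ n / (Nat.factorial n : ℝ) ^ 2‖ := by
  rcases eq_or_ne z 0 with rfl | hz
  · apply summable_of_ne_finset_zero (s := {0})
    intro n hn
    have hn0 : n ≠ 0 := by simpa using hn
    simp [zero_pow hn0]
  · apply summable_of_ratio_norm_eventually_le (r := 1/2) (by norm_num)
    have habs : ∀ n : ℕ, ‖poch m n * z ^ n / (Nat.factorial n : ℝ) ^ 2‖ =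
        poch m n * |z| ^ n / (Nat.factorial n : ℝ) ^ 2 := by
      intro n
      rw [Real.norm_eq_abs, abs_div, abs_mul, abs_pow,
        abs_of_pos (poch_pos hm n), abs_of_nonneg (by positivity :
          (0:ℝ) ≤ (Nat.factorial n : ℝ) ^ 2)]
    filter_upwards [eventually_ge_atTop ⌈2 * (m + 1) * |z|⌉₊] with n hn
    rw [norm_norm, norm_norm, habs, habs]
    have hfac : (0:ℝ) < (Nat.factorial n : ℝ) := by exact_mod_cast Nat.factorial_pos n
    have hn1 : (0:ℝ) < (n : ℝ) + 1 := by positivity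
    have hceil : 2 * (m + 1) * |z| ≤ (n : ℝ) + 1 := by
      have := Nat.le_ceil (2 * (m + 1) * |z|)
      have h2 : (⌈2 * (m + 1) * |z|⌉₊ : ℝ) ≤ (n : ℝ) := by exact_mod_cast hn
      linarith
    have key : (m + n) * |z| / ((n : ℝ) + 1) ^ 2 ≤ 1 / 2 := by
      rw [div_le_iff₀ (by positivity)]
      have h1 : (m + n) * |z| ≤ (m + 1) * ((n : ℝ) + 1) * |z| := by
        have : m + (n:ℝ) ≤ (m + 1) * ((n:ℝ) + 1) := by nlinarith [Nat.cast_nonneg (α := ℝ) n]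
        exact mul_le_mul_of_nonneg_right this (abs_nonneg z)
      nlinarith [abs_nonneg z, mul_le_mul_of_nonneg_left hceil
        (show (0:ℝ) ≤ ((n:ℝ) + 1) / 2 by positivity)]
    have hEq : poch m (n + 1) * |z| ^ (n + 1) / (Nat.factorial (n + 1) : ℝ) ^ 2 =
        (poch m n * |z| ^ n / (Nat.factorial n : ℝ) ^ 2) *
          ((m + n) * |z| / ((n : ℝ) + 1) ^ 2) := by
      rw [poch_succ, Nat.factorial_succ, pow_succ]
      push_cast
      field_simp
    rw [hEq]
    have hnonneg : (0:ℝ) ≤ poch m n * |z| ^ n / (Nat.factorial n : ℝ) ^ 2 := by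
      have := poch_pos hm n
      positivity
    calc poch m n * |z| ^ n / (Nat.factorial n : ℝ) ^ 2 * ((m + n) * |z| / ((n : ℝ) + 1) ^ 2)
        ≤ poch m n * |z| ^ n / (Nat.factorial n : ℝ) ^ 2 * (1 / 2) :=
          mul_le_mul_of_nonneg_left key hnonneg
      _ = 1 / 2 * (poch m n * |z| ^ n / (Nat.factorial n : ℝ) ^ 2) := by ring

section params

variable {K m P : ℝ}

lemma summable_norm_ec (hm : 0 < m) (x : ℝ) :
    Summable fun i : ℕ => ‖ec K m P i * x ^ i‖ := by
  have h := (summable_norm_F11 hm (K * (1 + K) / ((K + m) * P) * x)).mul_left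
    ‖Real.rpow (m / (K + m)) m * ((1 + K) / P)‖
  refine h.congr fun i => ?_
  rw [← norm_mul]
  congr 1
  unfold ec
  rw [mul_pow]
  ring

lemma summable_norm_gc (x : ℝ) (K P : ℝ) :
    Summable fun j : ℕ => ‖gc K P j * x ^ j‖ := by
  refine (Real.summable_pow_div_factorial |(-((1 + K) / P)) * x|).congr fun j => ?_
  rw [Real.norm_eq_abs]
  simp only [gc, abs_mul, abs_div, abs_pow, mul_pow]
  rw [abs_of_nonneg (by positivity : (0:ℝ) ≤ (Nat.factorial j : ℝ))]
  ring

/-- Pointwise power series expansion of the PDF. -/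
lemma fX_eq (hK : 0 < K) (hm : 0 < m) (hP : 0 < P) (x : ℝ) :
    fX K m P x = ∑' k : ℕ, ac K m P k * x ^ k := by
  have hexp : Real.exp (-(1 + K) * x / P) = ∑' j : ℕ, gc K P j * x ^ j := by
    have h1 : Real.exp (-(1 + K) * x / P) = ∑' j : ℕ, (-(1 + K) * x / P) ^ j / (Nat.factorial j) := by
      rw [Real.exp_eq_exp_ℝ, NormedSpace.exp_eq_tsum_div]
    rw [h1]
    refine tsum_congr fun j => ?_
    unfold gc
    rw [show -(1 + K) * x / P = (-((1 + K) / P)) * x from by ring, mul_pow]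
    ring
  have hF11 : Real.rpow (m / (K + m)) m * ((1 + K) / P) *
      F11 m (K * (1 + K) * x / ((K + m) * P)) = ∑' i : ℕ, ec K m P i * x ^ i := by
    unfold F11
    rw [← tsum_mul_left]
    refine tsum_congr fun i => ?_
    unfold ec
    rw [show K * (1 + K) * x / ((K + m) * P) = K * (1 + K) / ((K + m) * P) * x from by ring,
      mul_pow]
    ring
  have hmain : fX K m P x = (∑' i : ℕ, ec K m P i * x ^ i) * ∑' j : ℕ, gc K P j * x ^ j := by
    rw [← hF11, ← hexp]
    unfold fX
    ring
  rw [hmain, tsum_mul_tsum_eq_tsum_sum_range_of_summable_norm (summable_norm_ec hm x)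
    (summable_norm_gc x K P)]
  refine tsum_congr fun k => ?_
  unfold ac
  rw [Finset.sum_mul]
  refine Finset.sum_congr rfl fun i hi => ?_
  have hik : i ≤ k := Nat.lt_succ_iff.mp (Finset.mem_range.mp hi)
  have hx : x ^ i * x ^ (k - i) = x ^ k := by
    rw [← pow_add, Nat.add_sub_cancel' hik]
  calc ec K m P i * x ^ i * (gc K P (k - i) * x ^ (k - i))
      = ec K m P i * gc K P (k - i) * (x ^ i * x ^ (k - i)) := by ring
    _ = ec K m P i * gc K P (k - i) * x ^ k := by rw [hx]

lemma abs_ac_le (k : ℕ) :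
    |ac K m P k| ≤ ∑ i ∈ Finset.range (k + 1), |ec K m P i * gc K P (k - i)| :=
  Finset.abs_sum_le_sum_abs _ _

lemma summable_bound (hm : 0 < m) {t : ℝ} (ht : 0 ≤ t) :
    Summable fun k : ℕ =>
      (∑ i ∈ Finset.range (k + 1), |ec K m P i * gc K P (k - i)|) * t ^ k := by
  have hf : Summable fun i : ℕ => ‖|ec K m P i * t ^ i|‖ :=
    (summable_norm_ec (K := K) (P := P) hm t).congr fun i => by
      simp [Real.norm_eq_abs, abs_abs, abs_mul, abs_pow]
  have hg : Summable fun j : ℕ => ‖|gc K P j * t ^ j|‖ :=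
    (summable_norm_gc t K P).congr fun j => by
      simp [Real.norm_eq_abs, abs_abs, abs_mul, abs_pow]
  have h := summable_norm_sum_mul_range_of_summable_norm hf hg
  refine h.congr fun k => ?_
  have hnn : (0:ℝ) ≤ ∑ i ∈ Finset.range (k + 1), |ec K m P i * t ^ i| * |gc K P (k - i) * t ^ (k - i)| :=
    Finset.sum_nonneg fun i _ => by positivity
  rw [Real.norm_eq_abs, abs_of_nonneg hnn, Finset.sum_mul]
  refine Finset.sum_congr rfl fun i hi => ?_
  have hik : i ≤ k := Nat.lt_succ_iff.mp (Finset.mem_range.mp hi)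
  rw [abs_mul, abs_mul, abs_mul, abs_of_nonneg (pow_nonneg ht i),
    abs_of_nonneg (pow_nonneg ht (k - i))]
  calc |ec K m P i| * t ^ i * (|gc K P (k - i)| * t ^ (k - i))
      = |ec K m P i| * |gc K P (k - i)| * (t ^ i * t ^ (k - i)) := by ring
    _ = |ec K m P i| * |gc K P (k - i)| * t ^ k := by
        rw [← pow_add, Nat.add_sub_cancel' hik]

lemma summable_ac_pow (hm : 0 < m) {t : ℝ} (ht : 0 ≤ t) :
    Summable fun k : ℕ => |ac K m P k| * t ^ k :=
  Summable.of_nonneg_of_le (fun k => by positivity)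
    (fun k => mul_le_mul_of_nonneg_right (abs_ac_le k) (pow_nonneg ht k))
    (summable_bound hm ht)

lemma integral_term (c t : ℝ) (ht : 0 ≤ t) (k : ℕ) :
    ∫ x in Set.Ioc (0:ℝ) t, c * x ^ k = c * (t ^ (k + 1) / ((k:ℝ) + 1)) := by
  rw [← intervalIntegral.integral_of_le ht, intervalIntegral.integral_const_mul,
    integral_pow]
  simp

lemma integral_term_norm (c t : ℝ) (ht : 0 ≤ t) (k : ℕ) :
    ∫ x in Set.Ioc (0:ℝ) t, ‖c * x ^ k‖ = |c| * (t ^ (k + 1) / ((k:ℝ) + 1)) := by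
  rw [← integral_term |c| t ht k]
  refine setIntegral_congr_fun measurableSet_Ioc fun x hx => ?_
  rw [Real.norm_eq_abs, abs_mul, abs_pow, abs_of_nonneg (le_of_lt hx.1)]

lemma cdf_eq (hK : 0 < K) (hm : 0 < m) (hP : 0 < P) {t : ℝ} (ht : 0 ≤ t) :
    ∫ x in (0:ℝ)..t, fX K m P x = ∑' k : ℕ, ac K m P k * (t ^ (k + 1) / ((k:ℝ) + 1)) := by
  have hone : ∀ k : ℕ, (1:ℝ) ≤ (k:ℝ) + 1 := fun k => by
    have : (0:ℝ) ≤ (k:ℝ) := Nat.cast_nonneg k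
    linarith
  have hsum : Summable fun k : ℕ => ∫ x in Set.Ioc (0:ℝ) t, ‖ac K m P k * x ^ k‖ := by
    refine Summable.of_nonneg_of_le (fun k => ?_) (fun k => ?_)
      (((summable_ac_pow (K := K) (P := P) hm ht)).mul_left t)
    · rw [integral_term_norm _ _ ht]; positivity
    · rw [integral_term_norm _ _ ht]
      calc |ac K m P k| * (t ^ (k + 1) / ((k:ℝ) + 1))
          ≤ |ac K m P k| * t ^ (k + 1) := by
            apply mul_le_mul_of_nonneg_left _ (abs_nonneg _)
            exact div_le_self (by positivity) (hone k)
        _ = t * (|ac K m P k| * t ^ k) := by rw [pow_succ]; ring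
  have hint : ∀ k : ℕ, IntegrableOn (fun x : ℝ => ac K m P k * x ^ k) (Set.Ioc (0:ℝ) t) :=
    fun k => (continuous_const.mul (continuous_pow k)).integrableOn_Ioc
  rw [intervalIntegral.integral_of_le ht]
  have hfx : ∀ x ∈ Set.Ioc (0:ℝ) t, fX K m P x = ∑' k : ℕ, ac K m P k * x ^ k :=
    fun x _ => fX_eq hK hm hP x
  rw [setIntegral_congr_fun measurableSet_Ioc hfx,
    ← integral_tsum_of_summable_integral_norm hint hsum]
  exact tsum_congr fun k => integral_term _ _ ht k

lemma alpha_sum (hK : 0 < K) (hm : 0 < m) (hP : 0 < P) (γ : ℝ) (k : ℕ) :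
    ∑ i ∈ Finset.range (k + 1), alphaBar K m k i P γ
      = ac K m P k * (γ ^ (k + 1) / ((k:ℝ) + 1)) := by
  have hKm : K + m ≠ 0 := by positivity
  have hP' : P ≠ 0 := ne_of_gt hP
  rw [ac, Finset.sum_mul]
  refine Finset.sum_congr rfl fun i hi => ?_
  have hik : i ≤ k := Nat.lt_succ_iff.mp (Finset.mem_range.mp hi)
  obtain ⟨j, rfl⟩ := Nat.exists_eq_add_of_le hik
  have hji : i + j - i = j := Nat.add_sub_cancel_left i j
  unfold alphaBar ec gc
  rw [hji]
  rw [(div_mul_div_comm K (K + m) (1 + K) P).symm, mul_pow, neg_pow]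
  have hpow : ((1 + K) / P) ^ (i + j + 1) = ((1 + K) / P) ^ i * ((1 + K) / P) ^ j * ((1 + K) / P) := by
    rw [pow_succ, pow_add]
  rw [hpow]
  have hfi : ((Nat.factorial i : ℝ)) ≠ 0 := by positivity
  have hfj : ((Nat.factorial j : ℝ)) ≠ 0 := by positivity
  have hk1 : ((i + j : ℕ):ℝ) + 1 ≠ 0 := by positivity
  generalize (1 + K) / P = b
  simp only [div_eq_mul_inv, mul_inv]
  ring

end params

end OMAaux

theorem oma_outage_series (K m P γ Dalt ra lam : ℝ)
    (hK : 0 < K) (hm : 0 < m) (hP : 0 < P) (hγ : 0 < γ)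
    (hD : 0 < Dalt) (hra : 0 < ra) (hlam : 0 < lam) :
    Summable (fun k : ℕ => ∑ i ∈ Finset.range (k + 1),
      alphaBar K m k i P γ * Gbar Dalt ra lam k) ∧
    (∫ w in Real.sqrt (Dalt ^ 2 + lam ^ 2)..Real.sqrt (Dalt ^ 2 + lam ^ 2 + ra ^ 2),
        (2 * w / ra ^ 2) * ∫ x in (0 : ℝ)..(γ * w ^ 2), fX K m P x) =
      ∑' k : ℕ, ∑ i ∈ Finset.range (k + 1),
        alphaBar K m k i P γ * Gbar Dalt ra lam k := by
  open OMAaux MeasureTheory in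
  set A : ℝ := Dalt ^ 2 + lam ^ 2 with hAdef
  set B : ℝ := Dalt ^ 2 + lam ^ 2 + ra ^ 2 with hBdef
  have hA0 : 0 < A := by positivity
  have hB0 : 0 < B := by positivity
  have hAB : A ≤ B := by nlinarith [sq_nonneg ra]
  have hsA0 : 0 < Real.sqrt A := Real.sqrt_pos.mpr hA0
  have hsALE : Real.sqrt A ≤ Real.sqrt B := Real.sqrt_le_sqrt hAB
  set c : ℕ → ℝ := fun k => ac K m P k * (γ ^ (k + 1) / ((k : ℝ) + 1)) with hcdef
  have halpha : ∀ k : ℕ, ∑ i ∈ Finset.range (k + 1), alphaBar K m k i P γ = c k :=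
    fun k => alpha_sum hK hm hP γ k
  have hGpos : ∀ k : ℕ, 0 ≤ Gbar Dalt ra lam k := by
    intro k
    unfold Gbar
    apply div_nonneg _ (by positivity)
    have := pow_le_pow_left₀ hA0.le hAB (k + 2)
    simpa [← hAdef, ← hBdef] using sub_nonneg.mpr this
  have hGle : ∀ k : ℕ, Gbar Dalt ra lam k ≤ B ^ (k + 2) / ra ^ 2 := by
    intro k
    unfold Gbar
    rw [← hAdef, ← hBdef, div_le_div_iff₀ (by positivity) (by positivity)]
    have h1 : (0:ℝ) ≤ A ^ (k + 2) := by positivity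
    have h2 : (0:ℝ) < B ^ (k + 2) := by positivity
    have h3 : (2:ℝ) ≤ (k:ℝ) + 2 := by
      have : (0:ℝ) ≤ (k:ℝ) := Nat.cast_nonneg k
      linarith
    have h4 : (0:ℝ) ≤ B ^ (k + 2) * ra ^ 2 * (k:ℝ) := by positivity
    nlinarith [h4, mul_nonneg h1 (sq_nonneg ra), mul_nonneg h2.le (sq_nonneg ra)]
  -- master absolute summability
  have habs : Summable fun k : ℕ => |c k| * Gbar Dalt ra lam k := by
    refine Summable.of_nonneg_of_le (fun k => mul_nonneg (abs_nonneg _) (hGpos k)) (fun k => ?_)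
      (((summable_ac_pow (K := K) (P := P) hm
        (t := γ * B) (by positivity)).mul_left (γ * B ^ 2 / ra ^ 2)))
    have h1 : |c k| ≤ |ac K m P k| * γ ^ (k + 1) := by
      rw [hcdef, abs_mul, abs_of_nonneg (by positivity : (0:ℝ) ≤ γ ^ (k + 1) / ((k:ℝ) + 1))]
      apply mul_le_mul_of_nonneg_left _ (abs_nonneg _)
      apply div_le_self (by positivity)
      have : (0:ℝ) ≤ (k:ℝ) := Nat.cast_nonneg k
      linarith
    calc |c k| * Gbar Dalt ra lam k
        ≤ (|ac K m P k| * γ ^ (k + 1)) * (B ^ (k + 2) / ra ^ 2) :=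
          mul_le_mul h1 (hGle k) (hGpos k) (by positivity)
      _ = γ * B ^ 2 / ra ^ 2 * (|ac K m P k| * (γ * B) ^ k) := by
          rw [mul_pow, pow_succ γ, show k + 2 = k + 1 + 1 from rfl, pow_succ B, pow_succ B]
          ring
  -- per-k integral over the Ioc
  have hGint : ∀ (d : ℝ) (k : ℕ),
      ∫ w in Set.Ioc (Real.sqrt A) (Real.sqrt B), d * ((2 / ra ^ 2) * w ^ (2 * k + 3)) =
        d * Gbar Dalt ra lam k := by
    intro d k
    have hsB2 : Real.sqrt B ^ (2 * k + 3 + 1) = B ^ (k + 2) := by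
      rw [show 2 * k + 3 + 1 = 2 * (k + 2) from by ring, pow_mul, Real.sq_sqrt hB0.le]
    have hsA2 : Real.sqrt A ^ (2 * k + 3 + 1) = A ^ (k + 2) := by
      rw [show 2 * k + 3 + 1 = 2 * (k + 2) from by ring, pow_mul, Real.sq_sqrt hA0.le]
    rw [← intervalIntegral.integral_of_le hsALE]
    have : ∀ w : ℝ, d * ((2 / ra ^ 2) * w ^ (2 * k + 3)) = (d * (2 / ra ^ 2)) * w ^ (2 * k + 3) :=
      fun w => by ring
    simp_rw [this]
    rw [intervalIntegral.integral_const_mul, integral_pow, hsB2, hsA2]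
    unfold Gbar
    rw [← hAdef, ← hBdef]
    have hcast : ((2 * k + 3 : ℕ) : ℝ) + 1 = 2 * ((k : ℝ) + 2) := by push_cast; ring
    rw [hcast]
    have hk2 : ((k : ℝ) + 2) ≠ 0 := by positivity
    field_simp
  -- summability of norm integrals
  have hFsum : Summable fun k : ℕ =>
      ∫ w in Set.Ioc (Real.sqrt A) (Real.sqrt B),
        ‖c k * ((2 / ra ^ 2) * w ^ (2 * k + 3))‖ := by
    refine habs.congr fun k => ?_
    rw [← hGint |c k| k]
    refine (setIntegral_congr_fun measurableSet_Ioc fun w hw => ?_).symm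
    have hw0 : 0 < w := lt_trans hsA0 hw.1
    simp [Real.norm_eq_abs, abs_mul, abs_pow, abs_of_pos hw0,
      abs_of_nonneg (by positivity : (0:ℝ) ≤ 2 / ra ^ 2)]
  have hFint : ∀ k : ℕ, IntegrableOn
      (fun w : ℝ => c k * ((2 / ra ^ 2) * w ^ (2 * k + 3)))
      (Set.Ioc (Real.sqrt A) (Real.sqrt B)) :=
    fun k => (continuous_const.mul (continuous_const.mul (continuous_pow _))).integrableOn_Ioc
  -- pointwise identity for the integrand
  have hpt : ∀ w : ℝ, (2 * w / ra ^ 2) * ∫ x in (0:ℝ)..(γ * w ^ 2), fX K m P x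
      = ∑' k : ℕ, c k * ((2 / ra ^ 2) * w ^ (2 * k + 3)) := by
    intro w
    rw [cdf_eq hK hm hP (by positivity : (0:ℝ) ≤ γ * w ^ 2), ← tsum_mul_left]
    refine tsum_congr fun k => ?_
    have hw1 : (γ * w ^ 2) ^ (k + 1) = γ ^ (k + 1) * w ^ (2 * k + 2) := by
      rw [mul_pow, ← pow_mul, show 2 * (k + 1) = 2 * k + 2 from by ring]
    rw [hcdef, hw1, show 2 * k + 3 = (2 * k + 2) + 1 from rfl, pow_succ]
    ring
  constructor
  · refine Summable.of_norm_bounded habs fun k => ?_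
    rw [← Finset.sum_mul, halpha k, Real.norm_eq_abs, abs_mul, abs_of_nonneg (hGpos k)]
  · calc (∫ w in Real.sqrt A..Real.sqrt B,
          (2 * w / ra ^ 2) * ∫ x in (0:ℝ)..(γ * w ^ 2), fX K m P x)
        = ∫ w in Real.sqrt A..Real.sqrt B,
            ∑' k : ℕ, c k * ((2 / ra ^ 2) * w ^ (2 * k + 3)) :=
          intervalIntegral.integral_congr fun w _ => hpt w
      _ = ∫ w in Set.Ioc (Real.sqrt A) (Real.sqrt B),
            ∑' k : ℕ, c k * ((2 / ra ^ 2) * w ^ (2 * k + 3)) :=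
          intervalIntegral.integral_of_le hsALE
      _ = ∑' k : ℕ, ∫ w in Set.Ioc (Real.sqrt A) (Real.sqrt B),
            c k * ((2 / ra ^ 2) * w ^ (2 * k + 3)) :=
          (integral_tsum_of_summable_integral_norm hFint hFsum).symm
      _ = ∑' k : ℕ, c k * Gbar Dalt ra lam k := tsum_congr fun k => hGint (c k) k
      _ = ∑' k : ℕ, ∑ i ∈ Finset.range (k + 1), alphaBar K m k i P γ * Gbar Dalt ra lam k :=
          tsum_congr fun k => by rw [← halpha k, Finset.sum_mul]
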